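/- Let r ≥ 1 be an integer. For all sufficiently large n, every non-bipartite B_{r+1}-free simple graph G on n vertices satisfies e(G) ≤ ⌊(n−1)²/4⌋ + 2r. -/

import Mathlib

set_option linter.unusedSectionVars false
set_option linter.unnecessarySimpa false
set_option maxHeartbeats 1600000

open SimpleGraph Set

/-- `G` contains no book `B_{r+1}`, i.e. no two adjacent vertices of `G` have at least
`r + 1` common neighbours. -/
def BookFree {V : Type*} (r : ℕ) (G : SimpleGraph V) : Prop :=
  ∀ u v : V, G.Adj u v → ({w : V | G.Adj u w ∧ G.Adj v w}).ncard ≤ r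

namespace BookProof
open Finset



variable {V : Type*} [Fintype V] [DecidableEq V] (G : SimpleGraph V) [DecidableRel G.Adj]

/-- degree of `v` into finset `X` -/
def dd (X : Finset V) (v : V) : ℕ := (X.filter (fun w => G.Adj v w)).card

/-- ordered adjacent pairs count -/
def ep (X Y : Finset V) : ℕ := ∑ u ∈ X, dd G Y u

lemma dd_le_card (X : Finset V) (v : V) : dd G X v ≤ X.card :=
  Finset.card_filter_le _ _

lemma dd_union {X Y : Finset V} (h : Disjoint X Y) (v : V) :
    dd G (X ∪ Y) v = dd G X v + dd G Y v := by
  unfold dd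
  rw [Finset.filter_union, Finset.card_union_of_disjoint]
  exact Finset.disjoint_filter_filter h

lemma ep_union_left {X Y : Finset V} (Z : Finset V) (h : Disjoint X Y) :
    ep G (X ∪ Y) Z = ep G X Z + ep G Y Z := Finset.sum_union h

lemma ep_union_right (X : Finset V) {Y Z : Finset V} (h : Disjoint Y Z) :
    ep G X (Y ∪ Z) = ep G X Y + ep G X Z := by
  unfold ep; rw [← Finset.sum_add_distrib]
  exact Finset.sum_congr rfl fun u _ => dd_union G h u

lemma ep_eq_double_sum (X Y : Finset V) :
    ep G X Y = ∑ u ∈ X, ∑ w ∈ Y, (if G.Adj u w then 1 else 0) := by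
  unfold ep dd
  exact Finset.sum_congr rfl fun u _ => by rw [Finset.card_filter]

lemma ep_comm (X Y : Finset V) : ep G X Y = ep G Y X := by
  rw [ep_eq_double_sum, ep_eq_double_sum, Finset.sum_comm]
  refine Finset.sum_congr rfl fun u _ => Finset.sum_congr rfl fun w _ => ?_
  simp [G.adj_comm]

lemma ep_le_mul (X Y : Finset V) : ep G X Y ≤ X.card * Y.card := by
  unfold ep
  calc ∑ u ∈ X, dd G Y u ≤ ∑ _u ∈ X, Y.card :=
        Finset.sum_le_sum fun u _ => dd_le_card G Y u
    _ = X.card * Y.card := by rw [Finset.sum_const, smul_eq_mul]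

lemma ep_self_le (X : Finset V) : ep G X X ≤ X.card * (X.card - 1) := by
  unfold ep
  calc ∑ u ∈ X, dd G X u ≤ ∑ _u ∈ X, (X.card - 1) := by
        refine Finset.sum_le_sum fun u hu => ?_
        have : X.filter (fun w => G.Adj u w) ⊆ X.erase u := by
          intro w hw
          rw [Finset.mem_filter] at hw
          exact Finset.mem_erase.2 ⟨fun he => G.irrefl (he ▸ hw.2), hw.1⟩
        calc (X.filter (fun w => G.Adj u w)).card ≤ (X.erase u).card := Finset.card_le_card this
          _ = X.card - 1 := Finset.card_erase_of_mem hu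
    _ = X.card * (X.card - 1) := by rw [Finset.sum_const, smul_eq_mul]

lemma two_mul_card_edge : 2 * G.edgeFinset.card = ep G Finset.univ Finset.univ := by
  rw [← SimpleGraph.sum_degrees_eq_twice_card_edges]
  refine Finset.sum_congr rfl fun v _ => ?_
  rw [← SimpleGraph.card_neighborFinset_eq_degree, SimpleGraph.neighborFinset_eq_filter]
  rfl

lemma ep_split (T : Finset V) :
    ep G Finset.univ Finset.univ =
      ep G T T + ep G T Tᶜ + ep G Tᶜ T + ep G Tᶜ Tᶜ := by
  have hu : (Finset.univ : Finset V) = T ∪ Tᶜ := by simp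
  have hd : Disjoint T Tᶜ := disjoint_compl_right
  rw [hu, ep_union_left G _ hd, ep_union_right G _ hd, ep_union_right G _ hd]
  ring

/-- common neighbour finset inside `U` -/
lemma dd_add_dd_le_of_common {U : Finset V} {u v : V} {k : ℕ}
    (hcap : ((U.filter (fun w => G.Adj u w ∧ G.Adj v w)).card ≤ k)) :
    dd G U u + dd G U v ≤ U.card + k := by
  have hun : (U.filter (fun w => G.Adj u w)) ∪ (U.filter (fun w => G.Adj v w)) ⊆ U :=
    Finset.union_subset (Finset.filter_subset _ _) (Finset.filter_subset _ _)
  have hint : (U.filter (fun w => G.Adj u w)) ∩ (U.filter (fun w => G.Adj v w))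
      = U.filter (fun w => G.Adj u w ∧ G.Adj v w) := by
    rw [← Finset.filter_and]
  have h2 := Finset.card_union_add_card_inter (U.filter (fun w => G.Adj u w))
    (U.filter (fun w => G.Adj v w))
  have h3 := Finset.card_le_card hun
  rw [hint] at h2
  unfold dd
  omega
  


variable {V : Type*} {G : SimpleGraph V}

lemma colorable_two_of_no_odd_walk
    (h : ∀ (u : V) (w : G.Walk u u), ¬ Odd w.length) : G.Colorable 2 := by
  classical
  have hwalk : ∀ v : V, G.Walk (G.connectedComponentMk v).out v := fun v =>
    (SimpleGraph.ConnectedComponent.eq.mp ((G.connectedComponentMk v).out_eq)).some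
  let c : V → Bool := fun v => decide ((hwalk v).length % 2 = 1)
  have hvalid : ∀ {u v : V}, G.Adj u v → c u ≠ c v := by
    intro u v hadj hc
    have hcomp : (G.connectedComponentMk u) = (G.connectedComponentMk v) :=
      SimpleGraph.ConnectedComponent.sound hadj.reachable
    have hout : (G.connectedComponentMk u).out = (G.connectedComponentMk v).out := by
      rw [hcomp]
    let W : G.Walk (G.connectedComponentMk u).out (G.connectedComponentMk u).out :=
      ((hwalk u).append (SimpleGraph.Walk.cons hadj
        ((hwalk v).reverse.copy rfl hout.symm)))
    have hlen : W.length = (hwalk u).length + ((hwalk v).length + 1) := by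
      simp [W, SimpleGraph.Walk.length_append]
    have hW := h _ W
    rw [Nat.odd_iff, hlen] at hW
    have hpar : ((hwalk u).length % 2 = 1) ↔ ((hwalk v).length % 2 = 1) := by
      simpa [c, decide_eq_decide] using hc
    omega
  have col : G.Coloring Bool := SimpleGraph.Coloring.mk c (fun hadj => hvalid hadj)
  have := col.colorable
  simpa using this

lemma exists_odd_closed_walk (h : ¬ G.Colorable 2) :
    ∃ (u : V) (w : G.Walk u u), Odd w.length := by
  by_contra hno
  push_neg at hno
  exact h (colorable_two_of_no_odd_walk hno)



variable {V : Type*} [DecidableEq V] {G : SimpleGraph V}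

lemma length_one_adj {a b : V} (p : G.Walk a b) (hp : p.length = 1) :
    G.Adj a b ∧ s(a, b) ∈ p.edges := by
  cases p with
  | nil => simp at hp
  | cons h q =>
    have hq : q.length = 0 := by rw [SimpleGraph.Walk.length_cons] at hp; omega
    have heq := SimpleGraph.Walk.eq_of_length_eq_zero hq
    subst heq
    exact ⟨h, by simp⟩

lemma no_length_one_closed (u : V) (p : G.Walk u u) : p.length ≠ 1 := by
  intro hp
  exact G.irrefl (length_one_adj p hp).1

lemma length_rotate' {u x : V} (w : G.Walk u u) (hx : x ∈ w.support) :
    (w.rotate _ hx).length = w.length := by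
  have h1 := congrArg SimpleGraph.Walk.length (w.take_spec hx)
  rw [SimpleGraph.Walk.length_append] at h1
  rw [SimpleGraph.Walk.rotate, SimpleGraph.Walk.length_append]
  omega

lemma end_mem_support_tail {a b : V} (p : G.Walk a b) (h : 1 ≤ p.length) :
    b ∈ p.support.tail := by
  cases p with
  | nil => simp at h
  | cons hadj q =>
    rw [SimpleGraph.Walk.support_cons]
    simpa using q.end_mem_support

lemma mem_support_tail_of_mem {u : V} (w : G.Walk u u) (hlen : 1 ≤ w.length)
    {v : V} (hv : v ∈ w.support) : v ∈ w.support.tail := by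
  rw [SimpleGraph.Walk.support_eq_cons] at hv
  rcases List.mem_cons.mp hv with rfl | h
  · exact end_mem_support_tail w hlen
  · exact h

section MinWalk
variable {c : ℕ} (hmin : ∀ (v : V) (p : G.Walk v v), Odd p.length → c ≤ p.length)

include hmin

/-- the minimal odd closed walk has no repeated vertices in its support tail -/
lemma min_walk_tail_nodup {u : V} (w : G.Walk u u) (hw : w.length = c) (hodd : Odd c) :
    w.support.tail.Nodup := by
  have hc3 : 3 ≤ c := by
    have h1 := no_length_one_closed u w
    rcases hodd with ⟨k, hk⟩
    omega
  by_contra hdup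
  rw [List.nodup_iff_count_le_one] at hdup
  push_neg at hdup
  obtain ⟨x, hx2⟩ := hdup
  have hx2 : 2 ≤ w.support.tail.count x := hx2
  have hxmem : x ∈ w.support := by
    have : x ∈ w.support.tail := by
      by_contra hne
      rw [List.count_eq_zero_of_not_mem hne] at hx2; omega
    exact List.mem_of_mem_tail this
  set w' := w.rotate _ hxmem with hw'def
  have hlenw' : w'.length = c := by rw [hw'def, length_rotate', hw]
  have hcount' : 2 ≤ w'.support.tail.count x := by
    have hrot := SimpleGraph.Walk.support_rotate w _ hxmem
    rw [hrot.perm.count_eq]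
    exact hx2
  have hnotnil : ¬ w'.Nil := by
    rw [SimpleGraph.Walk.not_nil_iff_lt_length]; omega
  rw [SimpleGraph.Walk.not_nil_iff] at hnotnil
  obtain ⟨y, hadj, p, hpeq⟩ := hnotnil
  have hsupp : w'.support.tail = p.support := by rw [hpeq]; simp
  rw [hsupp] at hcount'
  have hxp : x ∈ p.support := List.count_pos_iff.mp (by omega)
  set p1 := p.takeUntil x hxp with hp1
  set p2 := p.dropUntil x hxp with hp2
  have hspec := p.take_spec hxp
  have hlens : p1.length + p2.length = p.length := by
    have := congrArg SimpleGraph.Walk.length hspec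
    rwa [SimpleGraph.Walk.length_append] at this
  have hplen : p.length + 1 = c := by
    have := congrArg SimpleGraph.Walk.length hpeq
    rw [SimpleGraph.Walk.length_cons] at this
    omega
  have hcnt1 : p1.support.count x = 1 := p.count_support_takeUntil_eq_one hxp
  have hcntp : p.support.count x = p1.support.count x + p2.support.tail.count x := by
    have : p.support = p1.support ++ p2.support.tail := by
      rw [← hspec, SimpleGraph.Walk.support_append]
    rw [this, List.count_append]
  have hp2len : 1 ≤ p2.length := by
    have hc2 : 1 ≤ p2.support.tail.count x := by omega
    have := List.count_le_length (l := p2.support.tail) (a := x)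
    have hl : p2.support.length = p2.length + 1 := SimpleGraph.Walk.length_support p2
    have : p2.support.tail.length = p2.length := by
      rw [List.length_tail, hl]
      omega
    omega
  -- two shorter closed walks
  have hW1 : Odd (SimpleGraph.Walk.cons hadj p1).length → False := by
    intro hoddW
    have := hmin _ _ hoddW
    rw [SimpleGraph.Walk.length_cons] at this
    omega
  have hW2 : Odd p2.length → False := by
    intro hoddW
    have := hmin _ _ hoddW
    omega
  rw [SimpleGraph.Walk.length_cons] at hW1
  have hc1 : c % 2 = 1 := Nat.odd_iff.mp hodd
  rcases Nat.even_or_odd p2.length with he | ho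
  · rw [Nat.even_iff] at he
    exact hW1 (by rw [Nat.odd_iff]; omega)
  · exact hW2 ho

/-- any edge between support vertices of the minimal walk is one of its edges -/
lemma min_walk_chordless {u : V} (w : G.Walk u u) (hw : w.length = c) (hodd : Odd c)
    {x y : V} (hx : x ∈ w.support) (hadj : G.Adj x y) (hy : y ∈ w.support) :
    s(x, y) ∈ w.edges := by
  set w' := w.rotate _ hx with hw'def
  have hlenw' : w'.length = c := by rw [hw'def, length_rotate', hw]
  have hedges := (SimpleGraph.Walk.rotate_edges w _ hx).perm.mem_iff (a := s(x,y))
  have hc3 : 3 ≤ c := by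
    have h1 := no_length_one_closed u w
    have h0 : c ≠ 0 := by rintro rfl; simpa using hodd
    rcases hodd with ⟨k, hk⟩
    omega
  have hy' : y ∈ w'.support := by
    have h1 : y ∈ w.support.tail := mem_support_tail_of_mem w (by omega) hy
    have h2 : y ∈ w'.support.tail :=
      ((SimpleGraph.Walk.support_rotate w _ hx).perm.mem_iff).mpr h1
    exact List.mem_of_mem_tail h2
  have hxy : x ≠ y := hadj.ne
  set p := w'.takeUntil y hy' with hp
  set q := w'.dropUntil y hy' with hq
  have hspec := w'.take_spec hy'
  have hlens : p.length + q.length = c := by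
    have := congrArg SimpleGraph.Walk.length hspec
    rwa [SimpleGraph.Walk.length_append, hlenw'] at this
  have hp1 : 1 ≤ p.length := by
    rcases Nat.eq_zero_or_pos p.length with h0 | h1
    · exact absurd (SimpleGraph.Walk.eq_of_length_eq_zero h0) hxy
    · exact h1
  have hq1 : 1 ≤ q.length := by
    rcases Nat.eq_zero_or_pos q.length with h0 | h1
    · exact absurd (SimpleGraph.Walk.eq_of_length_eq_zero h0) hxy.symm
    · exact h1
  -- closed walks using the chord
  have hWa := hmin _ (p.append (SimpleGraph.Walk.cons hadj.symm SimpleGraph.Walk.nil))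
  have hWb := hmin _ (SimpleGraph.Walk.cons hadj q)
  rw [SimpleGraph.Walk.length_append, SimpleGraph.Walk.length_cons,
    SimpleGraph.Walk.length_nil] at hWa
  rw [SimpleGraph.Walk.length_cons] at hWb
  have hc1 : c % 2 = 1 := Nat.odd_iff.mp hodd
  rcases Nat.even_or_odd p.length with he | ho
  · -- q.length + 1 odd
    rw [Nat.even_iff] at he
    have hodda : Odd (p.length + 1) := by rw [Nat.odd_iff]; omega
    have := hWa hodda
    have hq1' : q.length = 1 := by omega
    have hmem := (length_one_adj q hq1').2
    have : s(y, x) ∈ w'.edges := SimpleGraph.Walk.edges_dropUntil_subset _ hy' hmem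
    rw [Sym2.eq_swap] at this
    rwa [← hedges]
  · rw [Nat.odd_iff] at ho
    have hodda : Odd (q.length + 1) := by rw [Nat.odd_iff]; omega
    have := hWb hodda
    have hp1' : p.length = 1 := by omega
    have hmem := (length_one_adj p hp1').2
    have : s(x, y) ∈ w'.edges := SimpleGraph.Walk.edges_takeUntil_subset _ hy' hmem
    rwa [← hedges]

lemma min_walk_no_triangle (hc5 : 5 ≤ c) {a b d : V}
    (hab : G.Adj a b) (hbd : G.Adj b d) (hda : G.Adj d a) : False := by
  have := hmin a (SimpleGraph.Walk.cons hab (SimpleGraph.Walk.cons hbd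
    (SimpleGraph.Walk.cons hda SimpleGraph.Walk.nil))) ⟨1, by simp⟩
  simp only [SimpleGraph.Walk.length_cons, SimpleGraph.Walk.length_nil] at this
  omega

/-- three-arc argument -/
lemma min_walk_arcs (hodd : Odd c) (hc5 : 5 ≤ c) {v x y z : V}
    (hvx : G.Adj v x) (hvy : G.Adj v y) (hvz : G.Adj v z)
    (A : G.Walk x y) (B : G.Walk y z) (C : G.Walk z x)
    (hA : 1 ≤ A.length) (hB : 1 ≤ B.length) (hC : 1 ≤ C.length)
    (hsum : A.length + B.length + C.length = c) : False := by
  have hWA := hmin _ (SimpleGraph.Walk.cons hvx (A.append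
    (SimpleGraph.Walk.cons hvy.symm SimpleGraph.Walk.nil)))
  have hWB := hmin _ (SimpleGraph.Walk.cons hvy (B.append
    (SimpleGraph.Walk.cons hvz.symm SimpleGraph.Walk.nil)))
  have hWC := hmin _ (SimpleGraph.Walk.cons hvz (C.append
    (SimpleGraph.Walk.cons hvx.symm SimpleGraph.Walk.nil)))
  simp only [SimpleGraph.Walk.length_cons, SimpleGraph.Walk.length_append,
    SimpleGraph.Walk.length_nil] at hWA hWB hWC
  have hc1 : c % 2 = 1 := Nat.odd_iff.mp hodd
  rcases (show A.length % 2 = 1 ∨ B.length % 2 = 1 ∨ C.length % 2 = 1 by omega)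
      with ha | hb | hc
  · have h2 := hWA (by rw [Nat.odd_iff]; omega)
    have hB1 : B.length = 1 := by omega
    have hC1 : C.length = 1 := by omega
    exact min_walk_no_triangle hmin hc5 hvy (length_one_adj B hB1).1 hvz.symm
  · have h2 := hWB (by rw [Nat.odd_iff]; omega)
    have hA1 : A.length = 1 := by omega
    exact min_walk_no_triangle hmin hc5 hvx (length_one_adj A hA1).1 hvy.symm
  · have h2 := hWC (by rw [Nat.odd_iff]; omega)
    have hA1 : A.length = 1 := by omega
    exact min_walk_no_triangle hmin hc5 hvx (length_one_adj A hA1).1 hvy.symm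

end MinWalk



variable {V : Type*} [Fintype V] [DecidableEq V] {G : SimpleGraph V} [DecidableRel G.Adj]
  {c : ℕ} (hmin : ∀ (v : V) (p : G.Walk v v), Odd p.length → c ≤ p.length)


include hmin in
/-- every vertex outside the min odd cycle has at most 2 neighbours on it -/
lemma min_walk_nbrs_le_two (hc5 : 5 ≤ c) {u : V} (w : G.Walk u u)
    (hw : w.length = c) (hodd : Odd c) {v : V} (hv : v ∉ w.support) :
    dd G w.support.toFinset v ≤ 2 := by
  by_contra hgt
  push_neg at hgt
  have h3 : 2 < (w.support.toFinset.filter (fun s => G.Adj v s)).card := hgt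
  obtain ⟨x, hxm, y, hym, z, hzm, hxy, hxz, hyz⟩ := Finset.two_lt_card.mp h3
  rw [Finset.mem_filter, List.mem_toFinset] at hxm hym hzm
  obtain ⟨hxs, hvx⟩ := hxm
  obtain ⟨hys, hvy⟩ := hym
  obtain ⟨hzs, hvz⟩ := hzm
  have hc3 : 3 ≤ c := by omega
  set w' := w.rotate _ hxs with hw'def
  have hlenw' : w'.length = c := by rw [hw'def, length_rotate', hw]
  have hmemtl : ∀ t : V, t ∈ w.support → t ∈ w'.support := by
    intro t ht
    have h1 : t ∈ w.support.tail := mem_support_tail_of_mem w (by omega) ht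
    exact List.mem_of_mem_tail
      (((SimpleGraph.Walk.support_rotate w _ hxs).perm.mem_iff).mpr h1)
  have hy' : y ∈ w'.support := hmemtl y hys
  set p := w'.takeUntil y hy' with hpdef
  set q := w'.dropUntil y hy' with hqdef
  have hspec := w'.take_spec hy'
  have hlens : p.length + q.length = c := by
    have := congrArg SimpleGraph.Walk.length hspec
    rwa [SimpleGraph.Walk.length_append, hlenw'] at this
  have hp1 : 1 ≤ p.length := by
    rcases Nat.eq_zero_or_pos p.length with h0 | h1
    · exact absurd (SimpleGraph.Walk.eq_of_length_eq_zero h0) hxy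
    · exact h1
  have hq1 : 1 ≤ q.length := by
    rcases Nat.eq_zero_or_pos q.length with h0 | h1
    · exact absurd (SimpleGraph.Walk.eq_of_length_eq_zero h0) hxy.symm
    · exact h1
  have hz' : z ∈ p.support ∨ z ∈ q.support := by
    have hzw' : z ∈ w'.support := hmemtl z hzs
    rw [← hspec, SimpleGraph.Walk.support_append] at hzw'
    rcases List.mem_append.mp hzw' with h | h
    · exact Or.inl h
    · exact Or.inr (List.mem_of_mem_tail h)
  rcases hz' with hzp | hzq
  · -- arcs x→z, z→y, y→x
    set p1 := p.takeUntil z hzp with hp1def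
    set p2 := p.dropUntil z hzp with hp2def
    have hspec2 := p.take_spec hzp
    have hlens2 : p1.length + p2.length = p.length := by
      have := congrArg SimpleGraph.Walk.length hspec2
      rwa [SimpleGraph.Walk.length_append] at this
    have ha1 : 1 ≤ p1.length := by
      rcases Nat.eq_zero_or_pos p1.length with h0 | h1
      · exact absurd (SimpleGraph.Walk.eq_of_length_eq_zero h0) hxz
      · exact h1
    have ha2 : 1 ≤ p2.length := by
      rcases Nat.eq_zero_or_pos p2.length with h0 | h1
      · exact absurd (SimpleGraph.Walk.eq_of_length_eq_zero h0) hyz.symm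
      · exact h1
    exact min_walk_arcs hmin hodd hc5 hvx hvz hvy p1 p2 q ha1 ha2 hq1 (by omega)
  · -- arcs x→y, y→z, z→x
    set q1 := q.takeUntil z hzq with hq1def
    set q2 := q.dropUntil z hzq with hq2def
    have hspec2 := q.take_spec hzq
    have hlens2 : q1.length + q2.length = q.length := by
      have := congrArg SimpleGraph.Walk.length hspec2
      rwa [SimpleGraph.Walk.length_append] at this
    have ha1 : 1 ≤ q1.length := by
      rcases Nat.eq_zero_or_pos q1.length with h0 | h1
      · exact absurd (SimpleGraph.Walk.eq_of_length_eq_zero h0) hyz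
      · exact h1
    have ha2 : 1 ≤ q2.length := by
      rcases Nat.eq_zero_or_pos q2.length with h0 | h1
      · exact absurd (SimpleGraph.Walk.eq_of_length_eq_zero h0) hxz.symm
      · exact h1
    exact min_walk_arcs hmin hodd hc5 hvx hvy hvz p q1 q2 hp1 ha1 ha2 (by omega)

include hmin in
lemma min_walk_support_card {u : V} (w : G.Walk u u) (hw : w.length = c) (hodd : Odd c) :
    w.support.toFinset.card = c := by
  have hnd := min_walk_tail_nodup hmin w hw hodd
  have hc3 : 1 ≤ c := by
    rcases hodd with ⟨k, hk⟩; omega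
  have hu : u ∈ w.support.tail := end_mem_support_tail w (by omega)
  have hsupp : w.support = u :: w.support.tail := SimpleGraph.Walk.support_eq_cons w
  have : w.support.toFinset = w.support.tail.toFinset := by
    rw [hsupp]
    simp only [List.toFinset_cons]
    exact Finset.insert_eq_self.mpr (List.mem_toFinset.mpr hu)
  rw [this, List.toFinset_card_of_nodup hnd, List.length_tail,
    SimpleGraph.Walk.length_support, hw]
  omega


variable {V : Type*} [Fintype V] [DecidableEq V] (G : SimpleGraph V) [DecidableRel G.Adj]


lemma ep_eq_card_filter_product (X Y : Finset V) :
    ep G X Y = ((X ×ˢ Y).filter fun p => G.Adj p.1 p.2).card := by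
  rw [Finset.card_eq_sum_card_fiberwise (f := Prod.fst) (t := X)
    (fun p hp => (Finset.mem_product.mp (Finset.mem_filter.mp hp).1).1)]
  refine Finset.sum_congr rfl fun u hu => ?_
  unfold dd
  refine (Finset.card_bij (fun p _ => p.2) ?_ ?_ ?_).symm
  · intro p hp
    simp only [Finset.mem_filter, Finset.mem_product] at hp
    rcases hp with ⟨⟨⟨h1, h2⟩, h3⟩, h4⟩
    rw [h4] at h3
    exact Finset.mem_filter.mpr ⟨h2, h3⟩
  · intro p hp p' hp' hee
    simp only [Finset.mem_filter, Finset.mem_product] at hp hp'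
    exact Prod.ext (by rw [hp.2, hp'.2]) hee
  · intro y hy
    rw [Finset.mem_filter] at hy
    refine ⟨(u, y), ?_, rfl⟩
    simp only [Finset.mem_filter, Finset.mem_product]
    exact ⟨⟨⟨hu, hy.1⟩, hy.2⟩, trivial⟩

lemma ep_le_two_mul_of_edges (S : Finset V) (F : Finset (Sym2 V))
    (h : ∀ u ∈ S, ∀ v ∈ S, G.Adj u v → s(u, v) ∈ F) :
    ep G S S ≤ 2 * F.card := by
  rw [ep_eq_card_filter_product]
  set PP := ((S ×ˢ S).filter fun p => G.Adj p.1 p.2) with hPP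
  have himg : PP.image (fun p => s(p.1, p.2)) ⊆ F := by
    intro e he
    rw [Finset.mem_image] at he
    obtain ⟨p, hp, rfl⟩ := he
    rw [hPP, Finset.mem_filter, Finset.mem_product] at hp
    exact h p.1 hp.1.1 p.2 hp.1.2 hp.2
  calc PP.card ≤ 2 * (PP.image (fun p => s(p.1, p.2))).card := by
        refine Finset.card_le_mul_card_image PP 2 ?_
        intro b _
        induction b with
        | _ b1 b2 =>
          have : PP.filter (fun a => s(a.1, a.2) = s(b1, b2)) ⊆ {(b1, b2), (b2, b1)} := by
            intro p hp
            rw [Finset.mem_filter] at hp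
            have := hp.2
            rw [Sym2.eq_iff] at this
            rcases this with ⟨h1, h2⟩ | ⟨h1, h2⟩
            · simp [← h1, ← h2]
            · simp [← h1, ← h2]
          calc (PP.filter (fun a => s(a.1, a.2) = s(b1, b2))).card
              ≤ ({(b1, b2), (b2, b1)} : Finset (V × V)).card := Finset.card_le_card this
            _ ≤ 2 := Finset.card_insert_le _ _ |>.trans (by simp)
    _ ≤ 2 * F.card := by
        exact Nat.mul_le_mul_left 2 (Finset.card_le_card himg)

lemma sum_ite_adj (X : Finset V) (u : V) (k : ℕ) :
    ∑ y ∈ X, (if G.Adj u y then k else 0) = dd G X u * k := by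
  rw [← Finset.sum_filter]
  rw [Finset.sum_const, smul_eq_mul]
  rfl

/-- Mantel-type bound: in a triangle-free graph, `2 * ep X X ≤ |X|^2`. -/
lemma mantel_ordered (htf : ∀ a b d : V, G.Adj a b → G.Adj b d → G.Adj d a → False)
    (X : Finset V) : 2 * ep G X X ≤ X.card * X.card := by
  classical
  set n := X.card with hn
  have key : ∀ u v : V, G.Adj u v → dd G X u + dd G X v ≤ n := by
    intro u v huv
    have hdisj : Disjoint (X.filter (fun w => G.Adj u w)) (X.filter (fun w => G.Adj v w)) := by
      rw [Finset.disjoint_left]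
      intro w hw1 hw2
      rw [Finset.mem_filter] at hw1 hw2
      exact htf u v w huv hw2.2 hw1.2.symm
    have h1 := Finset.card_union_of_disjoint hdisj
    have hsub : (X.filter (fun w => G.Adj u w)) ∪ (X.filter (fun w => G.Adj v w)) ⊆ X :=
      Finset.union_subset (Finset.filter_subset _ _) (Finset.filter_subset _ _)
    have h2 := Finset.card_le_card hsub
    unfold dd
    omega
  set S1 := ∑ u ∈ X, dd G X u with hS1
  set S2 := ∑ u ∈ X, dd G X u * dd G X u with hS2
  have hepS1 : ep G X X = S1 := rfl
  have hstep : 2 * S2 ≤ n * S1 := by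
    have hL : ∑ u ∈ X, ∑ y ∈ X, (if G.Adj u y then dd G X u + dd G X y else 0)
        = 2 * S2 := by
      have hsplit : ∀ u ∈ X, ∑ y ∈ X, (if G.Adj u y then dd G X u + dd G X y else 0)
          = (∑ y ∈ X, (if G.Adj u y then dd G X u else 0))
            + ∑ y ∈ X, (if G.Adj u y then dd G X y else 0) := by
        intro u _
        rw [← Finset.sum_add_distrib]
        refine Finset.sum_congr rfl fun y _ => ?_
        by_cases hadj : G.Adj u y <;> simp [hadj]
      rw [Finset.sum_congr rfl hsplit, Finset.sum_add_distrib]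
      have hA : ∑ u ∈ X, ∑ y ∈ X, (if G.Adj u y then dd G X u else 0) = S2 := by
        refine Finset.sum_congr rfl fun u _ => ?_
        exact sum_ite_adj G X u (dd G X u)
      have hB : ∑ u ∈ X, ∑ y ∈ X, (if G.Adj u y then dd G X y else 0) = S2 := by
        rw [Finset.sum_comm]
        refine Finset.sum_congr rfl fun y _ => ?_
        have : ∀ u ∈ X, (if G.Adj u y then dd G X y else 0)
            = (if G.Adj y u then dd G X y else 0) := by
          intro u _
          by_cases h : G.Adj u y
          · rw [if_pos h, if_pos h.symm]
          · rw [if_neg h, if_neg (fun hh => h hh.symm)]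
        rw [Finset.sum_congr rfl this, sum_ite_adj G X y (dd G X y)]
      rw [hA, hB]
      ring
    have hR : ∑ u ∈ X, ∑ y ∈ X, (if G.Adj u y then dd G X u + dd G X y else 0)
        ≤ n * S1 := by
      have hp : ∀ u ∈ X, ∑ y ∈ X, (if G.Adj u y then dd G X u + dd G X y else 0)
          ≤ dd G X u * n := by
        intro u hu
        have : ∑ y ∈ X, (if G.Adj u y then dd G X u + dd G X y else 0)
            ≤ ∑ y ∈ X, (if G.Adj u y then n else 0) := by
          refine Finset.sum_le_sum fun y hy => ?_
          by_cases hadj : G.Adj u y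
          · simpa [hadj] using key u y hadj
          · simp [hadj]
        rw [sum_ite_adj G X u n] at this
        exact this
      calc ∑ u ∈ X, ∑ y ∈ X, (if G.Adj u y then dd G X u + dd G X y else 0)
          ≤ ∑ u ∈ X, dd G X u * n := Finset.sum_le_sum hp
        _ = S1 * n := by rw [hS1, Finset.sum_mul]
        _ = n * S1 := Nat.mul_comm _ _
    omega
  have hcs : S1 * S1 ≤ n * S2 := by
    have := sq_sum_le_card_mul_sum_sq (s := X) (f := fun u => (dd G X u : ℤ))
    rw [← hn] at this
    have hcast : ((S1 : ℤ)) ^ 2 ≤ (n : ℤ) * (S2 : ℤ) := by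
      push_cast [hS1, hS2]
      convert this using 2
      · rfl
      refine Finset.sum_congr rfl fun u _ => ?_
      ring
    have : (S1 * S1 : ℤ) ≤ ((n * S2 : ℕ) : ℤ) := by push_cast; nlinarith [hcast]
    exact_mod_cast this
  rw [hepS1]
  rcases Nat.eq_zero_or_pos S1 with h0 | hpos
  · rw [h0]; omega
  · have h1 : (2 * S1) * S1 ≤ (n * n) * S1 := by
      calc (2 * S1) * S1 = 2 * (S1 * S1) := by ring
        _ ≤ 2 * (n * S2) := Nat.mul_le_mul_left 2 hcs
        _ = n * (2 * S2) := by ring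
        _ ≤ n * (n * S1) := Nat.mul_le_mul_left n hstep
        _ = (n * n) * S1 := by ring
    exact Nat.le_of_mul_le_mul_right h1 hpos



variable {V : Type*} [Fintype V] [DecidableEq V] {G : SimpleGraph V} [DecidableRel G.Adj]
  {r : ℕ}


lemma bookFree_finset (hBF : BookFree r G) {u v : V} (huv : G.Adj u v) :
    (Finset.univ.filter fun w => G.Adj u w ∧ G.Adj v w).card ≤ r := by
  have h := hBF u v huv
  rwa [Set.ncard_eq_toFinset_card', Set.toFinset_setOf] at h

lemma common_le (hBF : BookFree r G) {u v : V} (huv : G.Adj u v) (U : Finset V) :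
    (U.filter fun w => G.Adj u w ∧ G.Adj v w).card ≤ r :=
  le_trans (Finset.card_le_card (Finset.filter_subset_filter _ (Finset.subset_univ U)))
    (bookFree_finset hBF huv)

/-- with a common neighbour `t` outside `U`, only `r-1` common nbrs inside `U` -/
lemma common_lt (hBF : BookFree r G) {u v t : V} (huv : G.Adj u v)
    (hut : G.Adj u t) (hvt : G.Adj v t) {U : Finset V} (htU : t ∉ U) :
    (U.filter fun w => G.Adj u w ∧ G.Adj v w).card + 1 ≤ r := by
  have hsub : insert t (U.filter fun w => G.Adj u w ∧ G.Adj v w)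
      ⊆ Finset.univ.filter fun w => G.Adj u w ∧ G.Adj v w := by
    intro w hw
    rcases Finset.mem_insert.mp hw with rfl | hw
    · exact Finset.mem_filter.mpr ⟨Finset.mem_univ _, hut, hvt⟩
    · exact Finset.mem_filter.mpr ⟨Finset.mem_univ _, (Finset.mem_filter.mp hw).2⟩
  have hcard := Finset.card_le_card hsub
  rw [Finset.card_insert_of_notMem (fun hmem => htU (Finset.mem_of_mem_filter _ hmem))]
    at hcard
  exact le_trans hcard (bookFree_finset hBF huv)

/-- H1 : two adjacent vertices with a common nbr outside `U` -/
lemma h1_bound (hBF : BookFree r G) {u v t : V} (huv : G.Adj u v)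
    (hut : G.Adj u t) (hvt : G.Adj v t) {U : Finset V} (htU : t ∉ U) :
    dd G U u + dd G U v + 1 ≤ U.card + r := by
  have hint : (U.filter (fun w => G.Adj u w)) ∩ (U.filter (fun w => G.Adj v w))
      = U.filter (fun w => G.Adj u w ∧ G.Adj v w) := by
    rw [← Finset.filter_and]
  have h2 := Finset.card_union_add_card_inter (U.filter (fun w => G.Adj u w))
    (U.filter (fun w => G.Adj v w))
  have h3 : ((U.filter (fun w => G.Adj u w)) ∪ (U.filter (fun w => G.Adj v w))).card
      ≤ U.card := Finset.card_le_card
        (Finset.union_subset (Finset.filter_subset _ _) (Finset.filter_subset _ _))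
  have h4 := common_lt hBF huv hut hvt htU
  rw [hint] at h2
  unfold dd
  omega

/-- H2 : adjacent pair, bound via non-neighbours -/
lemma h2_bound (hBF : BookFree r G) {u w : V} (huw : G.Adj u w) (U : Finset V) :
    dd G U u + dd G U w ≤ r + U.card := by
  have hsub : U.filter (fun x => G.Adj u x) ⊆
      (U.filter (fun x => G.Adj u x ∧ G.Adj w x)) ∪ (U \ U.filter (fun x => G.Adj w x)) := by
    intro x hx
    rw [Finset.mem_filter] at hx
    by_cases hw : G.Adj w x
    · exact Finset.mem_union_left _ (Finset.mem_filter.mpr ⟨hx.1, hx.2, hw⟩)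
    · exact Finset.mem_union_right _ (Finset.mem_sdiff.mpr
        ⟨hx.1, fun hmem => hw (Finset.mem_filter.mp hmem).2⟩)
  have h1 := Finset.card_le_card hsub
  have h2 := Finset.card_union_le (U.filter (fun x => G.Adj u x ∧ G.Adj w x))
    (U \ U.filter (fun x => G.Adj w x))
  have h3 := common_le hBF huw U
  have h4 : (U \ U.filter (fun x => G.Adj w x)).card
      = U.card - (U.filter (fun x => G.Adj w x)).card :=
    Finset.card_sdiff_of_subset (Finset.filter_subset _ _)
  have h5 : (U.filter (fun x => G.Adj w x)).card ≤ U.card := Finset.card_filter_le _ _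
  unfold dd
  omega

lemma union3 (F1 F2 F3 : Finset V) :
    F1.card + F2.card + F3.card ≤ (F1 ∪ F2 ∪ F3).card
      + ((F1 ∩ F2).card + (F1 ∩ F3).card + (F2 ∩ F3).card) := by
  have c12 := Finset.card_union_add_card_inter F1 F2
  have c3 := Finset.card_union_add_card_inter (F1 ∪ F2) F3
  have hdist : (F1 ∪ F2) ∩ F3 = (F1 ∩ F3) ∪ (F2 ∩ F3) := Finset.union_inter_distrib_right _ _ _
  have hle : ((F1 ∩ F3) ∪ (F2 ∩ F3)).card ≤ (F1 ∩ F3).card + (F2 ∩ F3).card :=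
    Finset.card_union_le _ _
  rw [hdist] at c3
  omega

/-- three mutually adjacent vertices, none in `U`: degree sum into `U` bound -/
lemma sum3_bound (hBF : BookFree r G) {x y z : V} (hxy : G.Adj x y) (hyz : G.Adj y z)
    (hzx : G.Adj z x) {U : Finset V} (hx : x ∉ U) (hy : y ∉ U) (hz : z ∉ U) :
    dd G U x + dd G U y + dd G U z + 3 ≤ U.card + 3 * r := by
  have hu := union3 (U.filter (fun w => G.Adj x w)) (U.filter (fun w => G.Adj y w))
    (U.filter (fun w => G.Adj z w))
  have hUcard : ((U.filter (fun w => G.Adj x w)) ∪ (U.filter (fun w => G.Adj y w))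
      ∪ (U.filter (fun w => G.Adj z w))).card ≤ U.card := by
    refine Finset.card_le_card ?_
    refine Finset.union_subset (Finset.union_subset ?_ ?_) ?_ <;> exact Finset.filter_subset _ _
  have i12 : ((U.filter (fun w => G.Adj x w)) ∩ (U.filter (fun w => G.Adj y w))).card + 1 ≤ r := by
    rw [← Finset.filter_and]
    exact common_lt hBF hxy hzx.symm hyz hz
  have i13 : ((U.filter (fun w => G.Adj x w)) ∩ (U.filter (fun w => G.Adj z w))).card + 1 ≤ r := by
    rw [← Finset.filter_and]
    exact common_lt hBF hzx.symm hxy hyz.symm hy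
  have i23 : ((U.filter (fun w => G.Adj y w)) ∩ (U.filter (fun w => G.Adj z w))).card + 1 ≤ r := by
    rw [← Finset.filter_and]
    exact common_lt hBF hyz hxy.symm hzx hx
  unfold dd
  omega



variable {V : Type*} [Fintype V] [DecidableEq V] {G : SimpleGraph V} [DecidableRel G.Adj]
  {r : ℕ}


instance instDecInduce (R : Finset V) : DecidableRel (G.induce (↑R : Set V)).Adj := by
  intro a b
  change Decidable (G.Adj a.1 b.1)
  infer_instance

lemma induce_degree_eq (R : Finset V) (v : (↑R : Set V)) :
    (G.induce (↑R : Set V)).degree v = dd G R v.1 := by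
  unfold dd
  rw [← SimpleGraph.card_neighborFinset_eq_degree]
  refine Finset.card_bij (fun w _ => w.1) ?_ ?_ ?_
  · intro w hw
    rw [SimpleGraph.mem_neighborFinset] at hw
    have hadj : G.Adj v.1 w.1 := hw
    exact Finset.mem_filter.mpr ⟨Finset.mem_coe.mp w.2, hadj⟩
  · intro w _ w' _ h
    exact Subtype.ext h
  · intro w hw
    rw [Finset.mem_filter] at hw
    refine ⟨⟨w, Finset.mem_coe.mpr hw.1⟩, ?_, rfl⟩
    rw [SimpleGraph.mem_neighborFinset]
    exact hw.2

lemma induce_edge_count (R : Finset V) :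
    2 * (G.induce (↑R : Set V)).edgeFinset.card = ∑ u ∈ R, dd G R u := by
  rw [← SimpleGraph.sum_degrees_eq_twice_card_edges]
  rw [← Finset.sum_coe_sort R (fun u => dd G R u)]
  exact Finset.sum_congr rfl fun v _ => induce_degree_eq R v

lemma induce_bookFree (hBF : BookFree r G) (R : Finset V) :
    BookFree r (G.induce (↑R : Set V)) := by
  intro u v huv
  have hadj : G.Adj u.1 v.1 := huv
  have hinj : Set.InjOn Subtype.val {w : (↑R : Set V) |
      (G.induce (↑R : Set V)).Adj u w ∧ (G.induce (↑R : Set V)).Adj v w} :=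
    Set.injOn_of_injective Subtype.val_injective
  calc ({w : (↑R : Set V) | (G.induce (↑R : Set V)).Adj u w ∧
          (G.induce (↑R : Set V)).Adj v w}).ncard
      = (Subtype.val '' {w : (↑R : Set V) | (G.induce (↑R : Set V)).Adj u w ∧
          (G.induce (↑R : Set V)).Adj v w}).ncard := (Set.ncard_image_of_injOn hinj).symm
    _ ≤ ({w : V | G.Adj u.1 w ∧ G.Adj v.1 w}).ncard := by
        refine Set.ncard_le_ncard ?_ (Set.toFinite _)
        rintro w ⟨w', hw', rfl⟩
        exact ⟨hw'.1, hw'.2⟩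
    _ ≤ r := hBF u.1 v.1 hadj

/-- from a 2-coloring of the induced graph, extract an independent partition -/
lemma partition_of_coloring (R : Finset V) (hcol : (G.induce (↑R : Set V)).Colorable 2) :
    ∃ A B : Finset V, A ∪ B = R ∧ Disjoint A B ∧
      (∀ u ∈ A, ∀ v ∈ A, ¬ G.Adj u v) ∧ (∀ u ∈ B, ∀ v ∈ B, ¬ G.Adj u v) := by
  obtain ⟨col⟩ := hcol
  classical
  let f : V → Fin 2 := fun v => if h : v ∈ R then col ⟨v, Finset.mem_coe.mpr h⟩ else 0
  refine ⟨R.filter (fun v => f v = 0), R.filter (fun v => ¬ f v = 0), ?_, ?_, ?_, ?_⟩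
  · rw [Finset.filter_union_filter_not_eq]
  · exact Finset.disjoint_filter_filter_not _ _ _
  · intro u hu v hv hadj
    rw [Finset.mem_filter] at hu hv
    have hadj' : (G.induce (↑R : Set V)).Adj ⟨u, Finset.mem_coe.mpr hu.1⟩
        ⟨v, Finset.mem_coe.mpr hv.1⟩ := hadj
    have := col.valid hadj'
    have hu2 : f u = col ⟨u, Finset.mem_coe.mpr hu.1⟩ := dif_pos hu.1
    have hv2 : f v = col ⟨v, Finset.mem_coe.mpr hv.1⟩ := dif_pos hv.1
    rw [hu2] at hu
    rw [hv2] at hv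
    exact this (hu.2.trans hv.2.symm)
  · intro u hu v hv hadj
    rw [Finset.mem_filter] at hu hv
    have hadj' : (G.induce (↑R : Set V)).Adj ⟨u, Finset.mem_coe.mpr hu.1⟩
        ⟨v, Finset.mem_coe.mpr hv.1⟩ := hadj
    have := col.valid hadj'
    have hu2 : f u = col ⟨u, Finset.mem_coe.mpr hu.1⟩ := dif_pos hu.1
    have hv2 : f v = col ⟨v, Finset.mem_coe.mpr hv.1⟩ := dif_pos hv.1
    rw [hu2] at hu
    rw [hv2] at hv
    have h1 : col ⟨u, Finset.mem_coe.mpr hu.1⟩ = 1 := by omega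
    have h2 : col ⟨v, Finset.mem_coe.mpr hv.1⟩ = 1 := by omega
    exact this (h1.trans h2.symm)


end BookProof

namespace BookProof
open Finset
lemma four_mul_le_sq (a b : ℕ) : 4 * (a * b) ≤ (a + b) * (a + b) := by
  have hid : ((a : ℤ) + b) * ((a : ℤ) + b)
      = 4 * ((a : ℤ) * b) + ((a : ℤ) - b) * ((a : ℤ) - b) := by ring
  have hnn := mul_self_nonneg ((a : ℤ) - b)
  have h : (4 * ((a : ℤ) * b)) ≤ ((a : ℤ) + b) * ((a : ℤ) + b) := by
    rw [hid]
    linarith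
  exact_mod_cast h

theorem main_bound (r : ℕ) (hr : 1 ≤ r) :
    ∀ n : ℕ, ∀ (V : Type) [Fintype V] [DecidableEq V] (G : SimpleGraph V),
      ∀ _ : DecidableRel G.Adj,
      Fintype.card V = n → ¬ G.Colorable 2 → BookFree r G →
      4 * G.edgeFinset.card ≤ (n - 1)^2 + 8 * r + 4 * ((10100 * (r+1) - n) * r) := by
  intro n
  induction n using Nat.strong_induction_on with
  | _ n IH =>
  intro V _ _ G _ hcard hnc hBF
  set K := 10100 * (r + 1) with hK
  by_cases hsmall : n < 100 * (r + 1)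
  · -- trivial bound for small n
    have he := SimpleGraph.card_edgeFinset_le_card_choose_two (G := G)
    rw [hcard, Nat.choose_two_right] at he
    have h1 : 4 * G.edgeFinset.card ≤ 2 * (n * (n-1)) := by
      have := Nat.div_mul_le_self (n * (n - 1)) 2
      have h2 : n * (n-1) / 2 * 2 ≤ n * (n-1) := Nat.div_mul_le_self _ _
      omega
    have hslack : 10000 * (r+1) ≤ K - n := by omega
    have hnn : n * (n - 1) ≤ (100 * (r+1)) * (100 * (r+1)) :=
      Nat.mul_le_mul (by omega) (by omega)
    have hrr : (100 * (r+1)) * (100 * (r+1)) = 10000 * ((r+1) * (r+1)) := by ring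
    have s3a : (r+1) ≤ r * (r+1) := Nat.le_mul_of_pos_left _ (by omega)
    have s3b : (r+1) * (r+1) = r * (r+1) + (r+1) := by ring
    have hfin : 4 * ((10000 * (r+1)) * r) ≤ 4 * ((K - n) * r) :=
      Nat.mul_le_mul_left 4 (Nat.mul_le_mul_right r hslack)
    have s7 : 4 * ((10000 * (r+1)) * r) = 40000 * (r * (r+1)) := by ring
    omega
  push_neg at hsmall
  -- minimum odd closed walk
  obtain ⟨u0, w0, hodd0⟩ := exists_odd_closed_walk hnc
  classical
  have hPex : ∃ L, ∃ u : V, ∃ w : G.Walk u u, w.length = L ∧ Odd L :=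
    ⟨w0.length, u0, w0, rfl, hodd0⟩
  set c := Nat.find hPex with hc
  obtain ⟨u, w, hw, hodd⟩ := Nat.find_spec hPex
  have hmin : ∀ (v : V) (p : G.Walk v v), Odd p.length → c ≤ p.length := by
    intro v p hp
    exact Nat.find_min' hPex ⟨v, p, rfl, hp⟩
  have hcodd : c % 2 = 1 := Nat.odd_iff.mp hodd
  have hcne1 : c ≠ 1 := fun h => no_length_one_closed u w (h ▸ hw)
  have h2e := two_mul_card_edge G
  rcases (show 5 ≤ c ∨ c = 3 by omega) with hc5 | hc3
  · -- CASE odd girth ≥ 5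
    set S := w.support.toFinset with hS
    have hScard : S.card = c := min_walk_support_card hmin w hw hodd
    have hSn : c ≤ n := by
      rw [← hScard, ← hcard]
      exact Finset.card_le_univ S
    have htf : ∀ a b d : V, G.Adj a b → G.Adj b d → G.Adj d a → False :=
      fun a b d h1 h2 h3 => min_walk_no_triangle hmin hc5 h1 h2 h3
    have hin : ep G S S ≤ 2 * c := by
      have hF : ∀ u' ∈ S, ∀ v' ∈ S, G.Adj u' v' → s(u', v') ∈ w.edges.toFinset := by
        intro u' hu' v' hv' hadj
        rw [List.mem_toFinset]
        exact min_walk_chordless hmin w hw hodd (List.mem_toFinset.mp hu') hadj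
          (List.mem_toFinset.mp hv')
      have := ep_le_two_mul_of_edges G S w.edges.toFinset hF
      have hc2 : w.edges.toFinset.card ≤ c := by
        calc w.edges.toFinset.card ≤ w.edges.length := List.toFinset_card_le _
          _ = c := by rw [SimpleGraph.Walk.length_edges, hw]
      omega
    have hcr : ep G Sᶜ S ≤ 2 * (n - c) := by
      have hpt : ∀ v' ∈ Sᶜ, dd G S v' ≤ 2 := by
        intro v' hv'
        rw [Finset.mem_compl] at hv'
        exact min_walk_nbrs_le_two hmin hc5 w hw hodd
          (fun hmem => hv' (List.mem_toFinset.mpr hmem))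
      have hcc : (Sᶜ : Finset V).card = n - c := by
        rw [Finset.card_compl, hScard, hcard]
      calc ep G Sᶜ S = ∑ v' ∈ Sᶜ, dd G S v' := rfl
        _ ≤ ∑ _v' ∈ Sᶜ, 2 := Finset.sum_le_sum hpt
        _ = (Sᶜ : Finset V).card * 2 := by rw [Finset.sum_const, smul_eq_mul]
        _ = 2 * (n - c) := by rw [hcc]; ring
    have hout : 2 * ep G Sᶜ Sᶜ ≤ (n - c) * (n - c) := by
      have := mantel_ordered G htf Sᶜ
      have hcc : (Sᶜ : Finset V).card = n - c := by
        rw [Finset.card_compl, hScard, hcard]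
      rwa [hcc] at this
    have hsplit := ep_split G S
    have hTT' := ep_self_le G S
    have hcomm := ep_comm G S Sᶜ
    -- numeric finale
    obtain ⟨m, hm⟩ : ∃ m, n = m + c := ⟨n - c, by omega⟩
    obtain ⟨c', hc'⟩ : ∃ c', c = c' + 5 := ⟨c - 5, by omega⟩
    have hnm : n - c = m := by omega
    have hn1 : n - 1 = m + c' + 4 := by omega
    rw [hn1, pow_two]
    have hexp : (m + c' + 4) * (m + c' + 4)
        = m * m + c' * c' + 2 * (m * c') + 8 * m + 8 * c' + 16 := by ring
    rw [hnm] at hcr hout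
    have h4 : 4 * G.edgeFinset.card = 2 * (2 * G.edgeFinset.card) := by ring
    have hepTTle : ep G S S ≤ 2 * c := hin
    -- 2e = epSS + 2 epScS + epScSc
    have key : 4 * G.edgeFinset.card ≤ 4 * c + 8 * m + m * m := by
      rw [h4, h2e, hsplit]
      have h5 : 2 * ep G Sᶜ Sᶜ ≤ m * m := hout
      omega
    have hc'm : m * c' ≥ 0 := Nat.zero_le _
    have hcsq : c' * c' ≥ 0 := Nat.zero_le _
    have hc4 : 4 * c = 4 * c' + 20 := by omega
    have hrr : 8 ≤ 8 * r := by omega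
    have hz1 := Nat.zero_le (m * c')
    have hz2 := Nat.zero_le (c' * c')
    have hz3 := Nat.zero_le (4 * ((K - n) * r))
    omega
  · -- CASE triangle
    have hw3 : w.length = 3 := by rw [hw, ← hc, hc3]
    have hne1 : ¬ w.Nil := SimpleGraph.Walk.not_nil_iff_lt_length.mpr (by omega)
    obtain ⟨y, hxy, q1, he1⟩ := SimpleGraph.Walk.not_nil_iff.mp hne1
    have hq1len : q1.length = 2 := by
      have := congrArg SimpleGraph.Walk.length he1
      rw [SimpleGraph.Walk.length_cons] at this
      omega
    have hne2 : ¬ q1.Nil := SimpleGraph.Walk.not_nil_iff_lt_length.mpr (by omega)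
    obtain ⟨z, hyz, q2, he2⟩ := SimpleGraph.Walk.not_nil_iff.mp hne2
    have hq2len : q2.length = 1 := by
      have := congrArg SimpleGraph.Walk.length he2
      rw [SimpleGraph.Walk.length_cons] at this
      omega
    have hzx : G.Adj z u := (length_one_adj q2 hq2len).1
    -- set up T and R
    have hune : u ≠ y := hxy.ne
    have hyne : y ≠ z := hyz.ne
    have hzne : z ≠ u := hzx.ne
    set T : Finset V := {u, y, z} with hT
    set R := Tᶜ with hRdef
    have hTcard : T.card = 3 := by
      rw [hT, Finset.card_insert_of_notMem (by simp [hune, Ne.symm hzne]),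
        Finset.card_insert_of_notMem (by simp [hyne]), Finset.card_singleton]
    obtain ⟨N, hN⟩ : ∃ N, n = N + 3 := ⟨n - 3, by omega⟩
    have hRcard : R.card = N := by
      rw [hRdef, Finset.card_compl, hTcard, hcard]
      omega
    have hNbig : 97 * (r + 1) ≤ N := by omega
    have huT : u ∈ T := by simp [hT]
    have hyT : y ∈ T := by simp [hT]
    have hzT : z ∈ T := by simp [hT]
    have huR : u ∉ R := by simp [hRdef, huT]
    have hyR : y ∉ R := by simp [hRdef, hyT]
    have hzR : z ∉ R := by simp [hRdef, hzT]
    have hsplitT := ep_split G T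
    rw [← hRdef] at hsplitT
    have hTT : ep G T T ≤ 6 := by
      have := ep_self_le G T
      rw [hTcard] at this
      omega
    have hTR : ep G T R = dd G R u + dd G R y + dd G R z := by
      rw [show ep G T R = ∑ t ∈ T, dd G R t from rfl, hT]
      rw [Finset.sum_insert (by simp [hune, Ne.symm hzne]),
        Finset.sum_insert (by simp [hyne]), Finset.sum_singleton]
      ring
    have hRT : ep G R T = ep G T R := ep_comm G R T
    have hGP := sum3_bound hBF hxy hyz hzx huR hyR hzR
    rw [hRcard] at hGP
    have hn1 : n - 1 = N + 2 := by omega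
    have hexp : (N + 2) * (N + 2) = N * N + 4 * N + 4 := by ring
    rw [hn1, pow_two]
    by_cases hbip : (G.induce (↑R : Set V)).Colorable 2
    · -- outside is bipartite
      obtain ⟨A, B, hun, hdisj, hindA, hindB⟩ := partition_of_coloring R hbip
      have hAR : A ⊆ R := hun ▸ Finset.subset_union_left
      have hBR : B ⊆ R := hun ▸ Finset.subset_union_right
      have habN : A.card + B.card = N := by
        rw [← Finset.card_union_of_disjoint hdisj, hun, hRcard]
      have huA : u ∉ A := fun h => huR (hAR h)
      have hyA : y ∉ A := fun h => hyR (hAR h)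
      have hzA : z ∉ A := fun h => hzR (hAR h)
      have huB : u ∉ B := fun h => huR (hBR h)
      have hyB : y ∉ B := fun h => hyR (hBR h)
      have hzB : z ∉ B := fun h => hzR (hBR h)
      have hddR : ∀ t : V, dd G R t = dd G A t + dd G B t := by
        intro t
        rw [← hun]
        exact dd_union G hdisj t
      have hepAA : ep G A A = 0 := by
        refine Finset.sum_eq_zero fun v hv => ?_
        refine Finset.card_eq_zero.mpr (Finset.filter_eq_empty_iff.mpr ?_)
        intro w' hw'
        exact hindA v hv w' hw'
      have hepBB : ep G B B = 0 := by
        refine Finset.sum_eq_zero fun v hv => ?_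
        refine Finset.card_eq_zero.mpr (Finset.filter_eq_empty_iff.mpr ?_)
        intro w' hw'
        exact hindB v hv w' hw'
      have hepABBA : ep G A B = ep G B A := ep_comm G A B
      have hepRR : ep G R R = 2 * ep G B A := by
        rw [← hun, ep_union_left G _ hdisj, ep_union_right G _ hdisj,
          ep_union_right G _ hdisj, hepAA, hepBB, hepABBA]
        ring
      have hba_le : ep G B A ≤ A.card * B.card :=
        (ep_le_mul G B A).trans_eq (Nat.mul_comm _ _)
      set mm := A.card * B.card - ep G B A with hmmdef
      have hmid : ep G B A + mm = A.card * B.card := by omega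
      have hmaster : 2 * G.edgeFinset.card
          ≤ 6 + 2 * (dd G R u + dd G R y + dd G R z) + 2 * ep G B A := by
        rw [h2e, hsplitT]
        omega
      by_cases hmbig : r ≤ mm + 1
      · have hfour := four_mul_le_sq A.card B.card
        rw [habN] at hfour
        have hz3 := Nat.zero_le (4 * ((K - n) * r))
        omega
      push_neg at hmbig
      by_cases hbal : 4 * (A.card * B.card) + 4 * r + 3 ≤ N * N
      · have hz3 := Nat.zero_le (4 * ((K - n) * r))
        omega
      push_neg at hbal
      have hbalance : ∀ a' b' : ℕ, a' + b' = N → N * N ≤ 4 * (a' * b') + 4 * r + 2 →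
          2 * a' ≤ N + 2 * r := by
        intro a' b' hsum hle
        by_contra hgt
        push_neg at hgt
        have h1 : (2 * (a' : ℤ) - N) ≥ 2 * (r : ℤ) + 1 := by
          have : (N : ℤ) + 2 * r < 2 * a' := by exact_mod_cast hgt
          omega
        have hb' : (b' : ℤ) = (N : ℤ) - a' := by
          have : (a' : ℤ) + b' = N := by exact_mod_cast hsum
          omega
        have hle' : ((N : ℤ)) * N ≤ 4 * ((a' : ℤ) * b') + 4 * r + 2 := by exact_mod_cast hle
        have hd2 : (2 * (a' : ℤ) - N) * (2 * (a' : ℤ) - N) ≤ 4 * r + 2 := by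
          have hid : (2 * (a' : ℤ) - N) * (2 * (a' : ℤ) - N)
              = (N : ℤ) * N - 4 * ((a' : ℤ) * (b' : ℤ)) := by
            rw [hb']
            ring
          rw [hid]
          linarith
        have hpos : (0 : ℤ) ≤ 2 * (r : ℤ) + 1 := by positivity
        have hmul : (2 * (r : ℤ) + 1) * (2 * (r : ℤ) + 1)
            ≤ (2 * (a' : ℤ) - N) * (2 * (a' : ℤ) - N) :=
          mul_le_mul h1 h1 hpos (hpos.trans h1)
        have hr' : (1 : ℤ) ≤ (r : ℤ) := by exact_mod_cast hr
        have hexp2 : (2 * (r : ℤ) + 1) * (2 * (r : ℤ) + 1) = 4 * ((r:ℤ) * r) + 4 * r + 1 := by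
          ring
        have hrr1 : (1 : ℤ) * 1 ≤ (r : ℤ) * r := mul_le_mul hr' hr' (by norm_num) (by linarith)
        linarith
      have hNN : N * N ≤ 4 * (A.card * B.card) + 4 * r + 2 := by omega
      have h2a : 2 * A.card ≤ N + 2 * r := hbalance A.card B.card habN hNN
      have h2b : 2 * B.card ≤ N + 2 * r := by
        refine hbalance B.card A.card (by omega) ?_
        rw [Nat.mul_comm B.card A.card]
        exact hNN
      have hmissgen : ∀ (X Y : Finset V) (k : ℕ),
          (∑ u' ∈ Y, dd G X u') + k = X.card * Y.card →
          ∀ w' ∈ Y, X.card ≤ dd G X w' + k := by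
        intro X Y k hid w' hw
        have herase : ∑ u' ∈ Y.erase w', dd G X u' + dd G X w' = ∑ u' ∈ Y, dd G X u' :=
          Finset.sum_erase_add Y _ hw
        have hbound : ∑ u' ∈ Y.erase w', dd G X u' ≤ (Y.erase w').card * X.card := by
          calc ∑ u' ∈ Y.erase w', dd G X u' ≤ ∑ _u' ∈ Y.erase w', X.card :=
                Finset.sum_le_sum (fun i _ => dd_le_card G X i)
            _ = (Y.erase w').card * X.card := by rw [Finset.sum_const, smul_eq_mul]
        have hec : (Y.erase w').card = Y.card - 1 := Finset.card_erase_of_mem hw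
        obtain ⟨k', hk'⟩ : ∃ k', Y.card = k' + 1 :=
          ⟨Y.card - 1, by have := Finset.card_pos.mpr ⟨w', hw⟩; omega⟩
        have hXY : X.card * Y.card = X.card * k' + X.card := by rw [hk']; ring
        have hcomm : (Y.erase w').card * X.card = X.card * k' := by
          rw [hec, hk', Nat.add_sub_cancel, Nat.mul_comm]
        omega
      have hmissA : ∀ w' ∈ B, A.card ≤ dd G A w' + mm := fun w' hw =>
        hmissgen A B mm hmid w' hw
      have hmissB : ∀ w' ∈ A, B.card ≤ dd G B w' + mm := by
        intro w' hw
        refine hmissgen B A mm ?_ w' hw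
        have h1 : (∑ u' ∈ A, dd G B u') = ep G A B := rfl
        rw [h1, hepABBA, Nat.mul_comm B.card A.card]
        exact hmid
      have hcapA : ∀ t : V, 1 ≤ dd G B t → dd G A t ≤ r + mm := by
        intro t ht
        obtain ⟨w', hw'⟩ := Finset.card_pos.mp ht
        rw [Finset.mem_filter] at hw'
        have h2' := h2_bound hBF hw'.2 A
        have h3' := hmissA w' hw'.1
        omega
      have hcapB : ∀ t : V, 1 ≤ dd G A t → dd G B t ≤ r + mm := by
        intro t ht
        obtain ⟨w', hw'⟩ := Finset.card_pos.mp ht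
        rw [Finset.mem_filter] at hw'
        have h2' := h2_bound hBF hw'.2 B
        have h3' := hmissB w' hw'.1
        omega
      have IIIc : ∀ t p q : V, dd G A p ≤ r + mm → dd G B p ≤ r + mm →
          dd G A q ≤ r + mm → dd G B q ≤ r + mm →
          (dd G A t + dd G B t) + (dd G A p + dd G B p) + (dd G A q + dd G B q) + 2
            ≤ N + 2 * r + mm := by
        intro t p q k1 k2 k3 k4
        rcases Nat.eq_zero_or_pos (dd G B t) with h5 | h5
        · have h6 := dd_le_card G A t
          omega
        rcases Nat.eq_zero_or_pos (dd G A t) with h7 | h7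
        · have h6 := dd_le_card G B t
          omega
        · have h8 := hcapA t h5
          have h9 := hcapB t h7
          omega
      have hU : (dd G A u + dd G B u) + (dd G A y + dd G B y) + (dd G A z + dd G B z) + 2
          ≤ N + 2 * r + mm := by
        by_cases c1 : dd G B u = 0 ∧ dd G A y = 0
        · have e1 := h1_bound hBF hzx.symm hxy hyz.symm hyA
          have e2 := h1_bound hBF hyz hxy.symm hzx huB
          omega
        by_cases c2 : dd G B u = 0 ∧ dd G A z = 0
        · have e1 := h1_bound hBF hxy hzx.symm hyz hzA
          have e2 := h1_bound hBF hyz.symm hzx hxy.symm huB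
          omega
        by_cases c3 : dd G B y = 0 ∧ dd G A u = 0
        · have e1 := h1_bound hBF hyz hxy.symm hzx huA
          have e2 := h1_bound hBF hzx.symm hxy hyz.symm hyB
          omega
        by_cases c4 : dd G B y = 0 ∧ dd G A z = 0
        · have e1 := h1_bound hBF hxy.symm hyz hzx.symm hzA
          have e2 := h1_bound hBF hzx hyz.symm hxy hyB
          omega
        by_cases c5 : dd G B z = 0 ∧ dd G A u = 0
        · have e1 := h1_bound hBF hyz.symm hzx hxy.symm huA
          have e2 := h1_bound hBF hxy hzx.symm hyz hzB
          omega
        by_cases c6 : dd G B z = 0 ∧ dd G A y = 0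
        · have e1 := h1_bound hBF hzx hyz.symm hxy hyA
          have e2 := h1_bound hBF hxy.symm hyz hzx.symm hzB
          omega
        by_cases d1 : dd G B u = 0
        · have hy2 : dd G A y ≠ 0 := fun h => c1 ⟨d1, h⟩
          have hz2 : dd G A z ≠ 0 := fun h => c2 ⟨d1, h⟩
          by_cases d2 : dd G B y = 0
          · by_cases d3 : dd G B z = 0
            · have e := sum3_bound hBF hxy hyz hzx huA hyA hzA
              omega
            · have e1 := h1_bound hBF hxy hzx.symm hyz hzA
              have k1 := hcapA z (Nat.pos_of_ne_zero d3)
              have k2 := hcapB z (Nat.pos_of_ne_zero hz2)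
              omega
          · by_cases d4 : dd G B z = 0
            · have e1 := h1_bound hBF hzx.symm hxy hyz.symm hyA
              have k1 := hcapA y (Nat.pos_of_ne_zero d2)
              have k2 := hcapB y (Nat.pos_of_ne_zero hy2)
              omega
            · have k1 := hcapA y (Nat.pos_of_ne_zero d2)
              have k2 := hcapB y (Nat.pos_of_ne_zero hy2)
              have k3 := hcapA z (Nat.pos_of_ne_zero d4)
              have k4 := hcapB z (Nat.pos_of_ne_zero hz2)
              have := IIIc u y z k1 k2 k3 k4
              omega
        · by_cases d5 : dd G A u = 0
          · have hy1 : dd G B y ≠ 0 := fun h => c3 ⟨h, d5⟩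
            have hz1 : dd G B z ≠ 0 := fun h => c5 ⟨h, d5⟩
            by_cases d6 : dd G A y = 0
            · by_cases d7 : dd G A z = 0
              · have e := sum3_bound hBF hxy hyz hzx huB hyB hzB
                omega
              · have e1 := h1_bound hBF hxy hzx.symm hyz hzB
                have k1 := hcapA z (Nat.pos_of_ne_zero hz1)
                have k2 := hcapB z (Nat.pos_of_ne_zero d7)
                omega
            · by_cases d8 : dd G A z = 0
              · have e1 := h1_bound hBF hzx.symm hxy hyz.symm hyB
                have k1 := hcapA y (Nat.pos_of_ne_zero hy1)
                have k2 := hcapB y (Nat.pos_of_ne_zero d6)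
                omega
              · have k1 := hcapA y (Nat.pos_of_ne_zero hy1)
                have k2 := hcapB y (Nat.pos_of_ne_zero d6)
                have k3 := hcapA z (Nat.pos_of_ne_zero hz1)
                have k4 := hcapB z (Nat.pos_of_ne_zero d8)
                have := IIIc u y z k1 k2 k3 k4
                omega
          · have cu1 := hcapA u (Nat.pos_of_ne_zero d1)
            have cu2 := hcapB u (Nat.pos_of_ne_zero d5)
            by_cases d9 : dd G B y ≠ 0 ∧ dd G A y ≠ 0
            · have k1 := hcapA y (Nat.pos_of_ne_zero d9.1)
              have k2 := hcapB y (Nat.pos_of_ne_zero d9.2)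
              have := IIIc z u y cu1 cu2 k1 k2
              omega
            · by_cases d10 : dd G B z ≠ 0 ∧ dd G A z ≠ 0
              · have k1 := hcapA z (Nat.pos_of_ne_zero d10.1)
                have k2 := hcapB z (Nat.pos_of_ne_zero d10.2)
                have := IIIc y u z cu1 cu2 k1 k2
                omega
              · have hy' : dd G B y = 0 ∨ dd G A y = 0 := by
                  rcases Nat.eq_zero_or_pos (dd G B y) with h | h
                  · exact Or.inl h
                  rcases Nat.eq_zero_or_pos (dd G A y) with h2 | h2
                  · exact Or.inr h2
                  exact absurd ⟨Nat.pos_iff_ne_zero.mp h, Nat.pos_iff_ne_zero.mp h2⟩ d9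
                have hz' : dd G B z = 0 ∨ dd G A z = 0 := by
                  rcases Nat.eq_zero_or_pos (dd G B z) with h | h
                  · exact Or.inl h
                  rcases Nat.eq_zero_or_pos (dd G A z) with h2 | h2
                  · exact Or.inr h2
                  exact absurd ⟨Nat.pos_iff_ne_zero.mp h, Nat.pos_iff_ne_zero.mp h2⟩ d10
                rcases hy' with py | py
                · rcases hz' with pz | pz
                  · have e1 := h1_bound hBF hyz hxy.symm hzx huA
                    omega
                  · exact absurd ⟨py, pz⟩ c4
                · rcases hz' with pz | pz
                  · exact absurd ⟨pz, py⟩ c6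
                  · have e1 := h1_bound hBF hyz hxy.symm hzx huB
                    omega
      have hfour := four_mul_le_sq A.card B.card
      rw [habN] at hfour
      have hD1 := hddR u
      have hD2 := hddR y
      have hD3 := hddR z
      have hz3 := Nat.zero_le (4 * ((K - n) * r))
      omega
    · -- outside is NOT bipartite: use induction hypothesis
      have hcard' : Fintype.card (↑R : Set V) = N := by
        rw [← Set.toFinset_card, Finset.toFinset_coe, hRcard]
      have hIH := IH N (by omega) (↑R : Set V) (G.induce (↑R : Set V))
        (instDecInduce R) hcard' hbip (induce_bookFree hBF R)
      have hepRR : ep G R R = 2 * (G.induce (↑R : Set V)).edgeFinset.card :=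
        (induce_edge_count R).symm
      obtain ⟨N', hN'⟩ : ∃ N', N = N' + 1 := ⟨N - 1, by omega⟩
      have hsq : (N + 2) * (N + 2) = (N - 1) * (N - 1) + 6 * N + 3 := by
        subst hN'
        rw [Nat.add_sub_cancel]
        ring
      rw [pow_two] at hIH
      have hKN : (K - N) * r ≤ (K - n) * r + 3 * r := by
        have h1 : K - N ≤ (K - n) + 3 := by omega
        calc (K - N) * r ≤ ((K - n) + 3) * r := Nat.mul_le_mul_right r h1
          _ = (K - n) * r + 3 * r := by ring
      have hmaster : 2 * G.edgeFinset.card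
          ≤ 6 + 2 * (dd G R u + dd G R y + dd G R z) + ep G R R := by
        rw [h2e, hsplitT]
        omega
      omega


end BookProof

/-- For every integer `r ≥ 1` and all sufficiently large `n`, every non-bipartite
`B_{r+1}`-free simple graph `G` on `n` vertices satisfies `e(G) ≤ ⌊(n-1)²/4⌋ + 2r`. -/
theorem stmt_1 (r : ℕ) (hr : 1 ≤ r) :
    ∃ n₀ : ℕ, ∀ n : ℕ, n₀ ≤ n →
      ∀ G : SimpleGraph (Fin n), ¬ G.Colorable 2 → BookFree r G →
        G.edgeSet.ncard ≤ (n - 1) ^ 2 / 4 + 2 * r := by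
  refine ⟨10100 * (r + 1), fun n hn G hnc hBF => ?_⟩
  classical
  letI hdec : DecidableRel G.Adj := Classical.decRel _
  have h := BookProof.main_bound r hr n (Fin n) G hdec (by simp) hnc hBF
  have hz : 10100 * (r + 1) - n = 0 := by omega
  rw [hz] at h
  have hef : G.edgeSet.ncard = G.edgeFinset.card := by
    rw [← SimpleGraph.coe_edgeFinset, Set.ncard_coe_finset]
  rw [hef]
  have h4 : 4 * G.edgeFinset.card ≤ (n - 1) ^ 2 + 8 * r := by omega
  have hle : G.edgeFinset.card ≤ ((n - 1) ^ 2 + 8 * r) / 4 :=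
    (Nat.le_div_iff_mul_le (by norm_num)).mpr (by omega)
  have heq : ((n - 1) ^ 2 + 8 * r) / 4 = (n - 1) ^ 2 / 4 + 2 * r := by
    rw [show 8 * r = 4 * (2 * r) by ring, Nat.add_mul_div_left _ _ (by norm_num)]
  omega
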